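/- The Misra-Bugajski map R : μ ↦ W_μ from probability measures on the projective Hilbert space to density operators, defined by tr(W_μ A) = ∫ tr(PA) dμ(P), is affine and surjective, and it is not injective if dim H ≥ 2. -/

import Mathlib

open MeasureTheory Topology Filter
open scoped ENNReal NNReal

/-- The rank-one operator `|φ⟩⟨φ|`. -/
noncomputable def rankOne {H : Type*} [NormedAddCommGroup H] [InnerProductSpace ℂ H]
    (φ : H) : H →L[ℂ] H := (innerSL ℂ φ).smulRight φ

/-- The set of rank-one orthogonal projections (pure states / projective Hilbert space). -/
noncomputable def projSet (H : Type*) [NormedAddCommGroup H] [InnerProductSpace ℂ H] :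
    Set (H →L[ℂ] H) := {T | ∃ φ : H, ‖φ‖ = 1 ∧ T = rankOne φ}

/-- The trace of an operator computed along a Hilbert basis. -/
noncomputable def traceAlong {H ι : Type*} [NormedAddCommGroup H] [InnerProductSpace ℂ H]
    (b : HilbertBasis ι ℂ H) (A : H →L[ℂ] H) : ℂ :=
  ∑' i, inner ℂ (b i) (A (b i))

/-- `W` is a density operator: positive, trace class, with trace one
(trace computed along the Hilbert basis `b`). -/
noncomputable def IsDensityOp {H ι : Type*} [NormedAddCommGroup H] [InnerProductSpace ℂ H]
    [CompleteSpace H] (b : HilbertBasis ι ℂ H) (W : H →L[ℂ] H) : Prop :=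
  W.IsPositive ∧ HasSum (fun i => (inner ℂ (b i) (W (b i)) : ℂ)) 1

/-- `W` is the image of `μ` under the Misra-Bugajski map:
`tr(W A) = ∫ tr(P A) dμ(P)` for all bounded self-adjoint `A`. -/
noncomputable def IsMB {H ι : Type*} [NormedAddCommGroup H] [InnerProductSpace ℂ H]
    [CompleteSpace H] [MeasurableSpace ↥(projSet H)] (b : HilbertBasis ι ℂ H)
    (μ : Measure ↥(projSet H)) (W : H →L[ℂ] H) : Prop :=
  IsDensityOp b W ∧ ∀ A : H →L[ℂ] H, IsSelfAdjoint A →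
    traceAlong b (W * A) = ∫ P, traceAlong b (P.1 * A) ∂μ

/- ### Auxiliary lemmas -/

set_option linter.unusedSectionVars false
set_option linter.unusedVariables false
set_option maxHeartbeats 1000000
set_option synthInstance.maxHeartbeats 1000000

local notation "⟪" x ", " y "⟫" => @inner ℂ _ _ x y

section Aux

lemma re_conj_mul (z : ℂ) : ((starRingEnd ℂ) z * z).re = ‖z‖ ^ 2 := by
  rw [mul_comm, Complex.mul_conj]
  simp [Complex.normSq_eq_norm_sq, ← Complex.ofReal_pow]

variable {H ι : Type*} [NormedAddCommGroup H] [InnerProductSpace ℂ H] [CompleteSpace H]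
  (b : HilbertBasis ι ℂ H)

lemma rankOne_apply (φ x : H) : rankOne φ x = ⟪φ, x⟫ • φ := rfl

lemma hasSum_rankOne_mul (φ : H) (A : H →L[ℂ] H) :
    HasSum (fun i => ⟪b i, ((rankOne φ) * A) (b i)⟫) ⟪φ, A φ⟫ := by
  have h := b.hasSum_inner_mul_inner (ContinuousLinearMap.adjoint A φ) φ
  rw [ContinuousLinearMap.adjoint_inner_left] at h
  refine h.congr_fun fun i => ?_
  rw [ContinuousLinearMap.mul_apply, rankOne_apply, inner_smul_right,
    ContinuousLinearMap.adjoint_inner_left]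

lemma hasSum_norm_inner_sq (x : H) :
    HasSum (fun i => ‖⟪b i, x⟫‖ ^ 2) (‖x‖ ^ 2) := by
  have h := (b.hasSum_inner_mul_inner x x).mapL Complex.reCLM
  simp only [Complex.reCLM_apply] at h
  have h3 : (⟪x, x⟫ : ℂ).re = ‖x‖ ^ 2 := by
    rw [inner_self_eq_norm_sq_to_K]; norm_cast
  rw [h3] at h
  refine h.congr_fun fun i => ?_
  rw [← inner_conj_symm x (b i), re_conj_mul]

lemma hasSum_norm_inner_sq' (x : H) :
    HasSum (fun i => ‖⟪x, b i⟫‖ ^ 2) (‖x‖ ^ 2) :=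
  (hasSum_norm_inner_sq b x).congr_fun fun i => by rw [norm_inner_symm]

lemma inner_map_left_of_isSelfAdjoint {S : H →L[ℂ] H} (hS : IsSelfAdjoint S) (x y : H) :
    ⟪S x, y⟫ = ⟪x, S y⟫ := by
  conv_lhs => rw [← hS.adjoint_eq]
  exact ContinuousLinearMap.adjoint_inner_left S y x

lemma core (S A : H →L[ℂ] H) (hS : IsSelfAdjoint S)
    (hsum : Summable fun i => ‖S (b i)‖ ^ 2) :
    ∃ T : ℂ, HasSum (fun i => ⟪b i, ((S * S) * A) (b i)⟫) T ∧
      HasSum (fun j => ⟪S (b j), A (S (b j))⟫) T := by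
  have h1 : Summable fun p : ι × ι => ‖⟪S (b p.1), b p.2⟫‖ ^ 2 := by
    rw [summable_prod_of_nonneg (fun p => by positivity)]
    refine ⟨fun i => by simpa using (hasSum_norm_inner_sq' b (S (b i))).summable, ?_⟩
    refine hsum.congr fun i => ?_
    simpa using ((hasSum_norm_inner_sq' b (S (b i))).tsum_eq).symm
  have key2 : ∀ j, (∑' i, ‖⟪S (b j), A (b i)⟫‖ ^ 2)
      = ‖(ContinuousLinearMap.adjoint A) (S (b j))‖ ^ 2 := by
    intro j
    rw [← (hasSum_norm_inner_sq' b (ContinuousLinearMap.adjoint A (S (b j)))).tsum_eq]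
    congr 1; funext i; rw [ContinuousLinearMap.adjoint_inner_left]
  have h2' : Summable fun q : ι × ι => ‖⟪S (b q.1), A (b q.2)⟫‖ ^ 2 := by
    rw [summable_prod_of_nonneg (fun p => by positivity)]
    constructor
    · intro j
      refine (hasSum_norm_inner_sq' b (ContinuousLinearMap.adjoint A (S (b j)))).summable.congr
        fun i => ?_
      simp only
      rw [ContinuousLinearMap.adjoint_inner_left]
    · refine Summable.of_nonneg_of_le (fun j => tsum_nonneg fun i => by positivity) (fun j => ?_)
        (hsum.mul_left (‖ContinuousLinearMap.adjoint A‖ ^ 2))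
      have : (∑' (y : ι), ‖⟪S (b j), A (b y)⟫‖ ^ 2)
          ≤ ‖ContinuousLinearMap.adjoint A‖ ^ 2 * ‖S (b j)‖ ^ 2 := by
        rw [key2 j]
        calc ‖(ContinuousLinearMap.adjoint A) (S (b j))‖ ^ 2
            ≤ (‖ContinuousLinearMap.adjoint A‖ * ‖S (b j)‖) ^ 2 := by
              gcongr; exact (ContinuousLinearMap.adjoint A).le_opNorm _
          _ = ‖ContinuousLinearMap.adjoint A‖ ^ 2 * ‖S (b j)‖ ^ 2 := by ring
      simpa using this
  have h2 : Summable fun p : ι × ι => ‖⟪S (b p.2), A (b p.1)⟫‖ ^ 2 := by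
    have := (Equiv.prodComm ι ι).summable_iff.mpr h2'
    exact this.congr fun p => rfl
  have hg : Summable fun p : ι × ι => ⟪S (b p.1), b p.2⟫ * ⟪S (b p.2), A (b p.1)⟫ := by
    apply Summable.of_norm
    refine Summable.of_nonneg_of_le (fun p => norm_nonneg _) (fun p => ?_)
      (((h1.add h2).div_const 2))
    simp only [norm_mul]
    set u := ‖⟪S (b p.1), b p.2⟫‖ with hu'
    set v := ‖⟪S (b p.2), A (b p.1)⟫‖ with hv'
    have hu : 0 ≤ u := norm_nonneg _
    have hv : 0 ≤ v := norm_nonneg _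
    nlinarith [sq_nonneg (u - v)]
  have hfib1 : ∀ i, HasSum (fun j => ⟪S (b i), b j⟫ * ⟪S (b j), A (b i)⟫)
      ⟪b i, ((S * S) * A) (b i)⟫ := by
    intro i
    have hv : ⟪b i, ((S * S) * A) (b i)⟫ = ⟪S (b i), S (A (b i))⟫ := by
      rw [ContinuousLinearMap.mul_apply, ContinuousLinearMap.mul_apply,
        ← inner_map_left_of_isSelfAdjoint hS (b i) (S (A (b i)))]
    rw [hv]
    refine (b.hasSum_inner_mul_inner (S (b i)) (S (A (b i)))).congr_fun fun j => ?_
    rw [inner_map_left_of_isSelfAdjoint hS (b j) (A (b i))]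
  have hfib2 : ∀ j, HasSum (fun i => ⟪S (b i), b j⟫ * ⟪S (b j), A (b i)⟫)
      ⟪S (b j), A (S (b j))⟫ := by
    intro j
    have h := b.hasSum_inner_mul_inner (ContinuousLinearMap.adjoint A (S (b j))) (S (b j))
    rw [ContinuousLinearMap.adjoint_inner_left] at h
    refine h.congr_fun fun i => ?_
    rw [inner_map_left_of_isSelfAdjoint hS (b i) (b j),
      ← ContinuousLinearMap.adjoint_inner_left A (b i) (S (b j))]
    ring
  refine ⟨∑' p : ι × ι, ⟪S (b p.1), b p.2⟫ * ⟪S (b p.2), A (b p.1)⟫,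
    HasSum.prod_fiberwise hg.hasSum hfib1, ?_⟩
  have hgswap := ((Equiv.prodComm ι ι).hasSum_iff).mpr hg.hasSum
  exact HasSum.prod_fiberwise hgswap hfib2

lemma density_sqrt {W : H →L[ℂ] H} (hW : IsDensityOp b W) :
    ∃ S : H →L[ℂ] H, IsSelfAdjoint S ∧ S * S = W ∧ HasSum (fun i => ‖S (b i)‖ ^ 2) 1 := by
  obtain ⟨hpos, hdiag⟩ := hW
  have hWnn : (0 : H →L[ℂ] H) ≤ W := (ContinuousLinearMap.nonneg_iff_isPositive W).mpr hpos
  have hsq : CFC.sqrt W * CFC.sqrt W = W := CFC.sqrt_mul_sqrt_self W hWnn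
  have hsa : IsSelfAdjoint (CFC.sqrt W) :=
    ((ContinuousLinearMap.nonneg_iff_isPositive _).mp (CFC.sqrt_nonneg W)).isSelfAdjoint
  refine ⟨CFC.sqrt W, hsa, hsq, ?_⟩
  have h1 : ∀ i, ⟪b i, W (b i)⟫ = ((‖CFC.sqrt W (b i)‖ ^ 2 : ℝ) : ℂ) := by
    intro i
    conv_lhs => rw [← hsq]
    rw [ContinuousLinearMap.mul_apply,
      ← inner_map_left_of_isSelfAdjoint hsa (b i) (CFC.sqrt W (b i)),
      inner_self_eq_norm_sq_to_K]
    norm_cast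
  have h := hdiag.mapL Complex.reCLM
  simp only [Complex.reCLM_apply, Complex.one_re] at h
  refine h.congr_fun fun i => ?_
  rw [h1 i, Complex.ofReal_re]

lemma density_hasSum {W : H →L[ℂ] H} (hW : IsDensityOp b W) {S : H →L[ℂ] H}
    (hsa : IsSelfAdjoint S) (hsq : S * S = W) (hs : Summable fun i => ‖S (b i)‖ ^ 2)
    (A : H →L[ℂ] H) :
    HasSum (fun i => ⟪b i, (W * A) (b i)⟫) (∑' j, ⟪S (b j), A (S (b j))⟫) := by
  obtain ⟨T, h1, h2⟩ := core b S A hsa hs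
  rw [hsq] at h1
  rwa [h2.tsum_eq]

lemma density_summable {W : H →L[ℂ] H} (hW : IsDensityOp b W) (A : H →L[ℂ] H) :
    Summable fun i => ⟪b i, (W * A) (b i)⟫ := by
  obtain ⟨S, hsa, hsq, hs⟩ := density_sqrt b hW
  exact (density_hasSum b hW hsa hsq hs.summable A).summable

lemma traceAlong_rankOne (φ : H) (A : H →L[ℂ] H) :
    traceAlong b (rankOne φ * A) = ⟪φ, A φ⟫ := (hasSum_rankOne_mul b φ A).tsum_eq

lemma hb_countable {H' ι' : Type*} [NormedAddCommGroup H'] [InnerProductSpace ℂ H']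
    [SecondCountableTopology H'] (b : HilbertBasis ι' ℂ H') : Countable ι' := by
  have hdist : ∀ i j : ι', i ≠ j → (1 : ℝ) ≤ dist (b i) (b j) := by
    intro i j hij
    have h2 : ‖b i - b j‖ ^ 2 = 2 := by
      rw [@norm_sub_sq ℂ]
      simp [b.orthonormal.2 hij, b.orthonormal.1 i, b.orthonormal.1 j]
      norm_num
    rw [dist_eq_norm]
    nlinarith [norm_nonneg (b i - b j)]
  have hpair : Pairwise (Function.onFun Disjoint fun i => Metric.ball (b i) (2⁻¹ : ℝ)) := by
    intro i j hij
    apply Metric.ball_disjoint_ball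
    calc (2⁻¹ : ℝ) + 2⁻¹ = 1 := by norm_num
      _ ≤ dist (b i) (b j) := hdist i j hij
  exact hpair.countable_of_isOpen_disjoint (fun i => Metric.isOpen_ball)
    (fun i => Metric.nonempty_ball.mpr (by norm_num))

lemma inner_real_smul_left (x y : H) (r : ℝ) : ⟪r • x, y⟫ = (r : ℂ) * ⟪x, y⟫ := by
  rw [← Complex.coe_smul, inner_smul_left, Complex.conj_ofReal]

lemma inner_real_smul_right (x y : H) (r : ℝ) : ⟪x, r • y⟫ = (r : ℂ) * ⟪x, y⟫ := by
  rw [← Complex.coe_smul, inner_smul_right]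

lemma isPositive_real_smul {W : H →L[ℂ] H} (hW : W.IsPositive) {r : ℝ} (hr : 0 ≤ r) :
    (r • W).IsPositive := by
  have hsym := (ContinuousLinearMap.isSelfAdjoint_iff_isSymmetric).mp hW.isSelfAdjoint
  constructor
  · intro x y
    simp only [ContinuousLinearMap.coe_coe, ContinuousLinearMap.smul_apply]
    rw [inner_real_smul_left, inner_real_smul_right]
    congr 1
    exact hsym x y
  · intro x
    have h : (r • W).reApplyInnerSelf x = r * W.reApplyInnerSelf x := by
      simp only [ContinuousLinearMap.reApplyInnerSelf_apply, ContinuousLinearMap.smul_apply]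
      rw [inner_real_smul_left, ← smul_eq_mul, Complex.coe_smul, RCLike.smul_re]
    rw [h]
    exact mul_nonneg hr (hW.2 x)

lemma rankOne_isPositive (φ : H) : (rankOne φ).IsPositive := by
  constructor
  · intro x y
    simp only [ContinuousLinearMap.coe_coe, rankOne_apply, inner_smul_left, inner_smul_right,
      inner_conj_symm]
    ring
  · intro x
    have h : (rankOne φ).reApplyInnerSelf x = ‖⟪φ, x⟫‖ ^ 2 := by
      rw [ContinuousLinearMap.reApplyInnerSelf_apply, rankOne_apply, inner_smul_left]
      exact re_conj_mul _
    rw [h]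
    positivity

lemma hasSum_diag_rankOne (φ : H) (hφ : ‖φ‖ = 1) :
    HasSum (fun i => ⟪b i, rankOne φ (b i)⟫) 1 := by
  have h := hasSum_rankOne_mul b φ (1 : H →L[ℂ] H)
  rw [mul_one] at h
  have : ⟪φ, (1 : H →L[ℂ] H) φ⟫ = 1 := by
    simp [inner_self_eq_norm_sq_to_K, hφ]
  rwa [this] at h

section Meas

variable [MeasurableSpace ↥(projSet H)] [BorelSpace ↥(projSet H)]

lemma f_measurable (hι : Countable ι) (A : H →L[ℂ] H) :
    Measurable (fun P : ↥(projSet H) => traceAlong b (P.1 * A)) := by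
  have hF : ∀ s : Finset ι, Measurable
      (fun P : ↥(projSet H) => ∑ i ∈ s, ⟪b i, (P.1 * A) (b i)⟫) := by
    intro s
    apply Finset.measurable_sum
    intro i _
    have hc : Continuous fun P : ↥(projSet H) => P.1 (A (b i)) :=
      (ContinuousLinearMap.apply ℂ H (A (b i))).continuous.comp continuous_subtype_val
    exact (continuous_const.inner hc).measurable
  apply measurable_of_tendsto_metrizable' (atTop : Filter (Finset ι)) hF
  rw [tendsto_pi_nhds]
  intro P
  obtain ⟨φ, hφ, hP⟩ := P.2
  have h := hasSum_rankOne_mul b φ A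
  have hPe : (P : H →L[ℂ] H) = rankOne φ := hP
  have heq : traceAlong b ((P : H →L[ℂ] H) * A) = ⟪φ, A φ⟫ := by
    rw [hPe]; exact traceAlong_rankOne b φ A
  rw [heq]
  have h' : HasSum (fun i => ⟪b i, ((P : H →L[ℂ] H) * A) (b i)⟫) ⟪φ, A φ⟫ := by
    rw [hPe]; exact h
  exact h'

lemma f_bound (A : H →L[ℂ] H) (P : ↥(projSet H)) :
    ‖traceAlong b ((P : H →L[ℂ] H) * A)‖ ≤ ‖A‖ := by
  obtain ⟨φ, hφ, hP⟩ := P.2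
  have hPe : (P : H →L[ℂ] H) = rankOne φ := hP
  rw [hPe, traceAlong_rankOne]
  calc ‖⟪φ, A φ⟫‖ ≤ ‖φ‖ * ‖A φ‖ := norm_inner_le_norm _ _
    _ ≤ ‖φ‖ * (‖A‖ * ‖φ‖) := by gcongr; exact A.le_opNorm φ
    _ = ‖A‖ := by rw [hφ]; ring

lemma f_integrable (hι : Countable ι) (A : H →L[ℂ] H) (μ : Measure ↥(projSet H))
    [IsFiniteMeasure μ] :
    Integrable (fun P : ↥(projSet H) => traceAlong b (P.1 * A)) μ :=
  Integrable.mono' (integrable_const ‖A‖) ((f_measurable b hι A).aestronglyMeasurable)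
    (Filter.Eventually.of_forall (f_bound b A))

end Meas

end Aux

theorem stmt14 {H ι : Type*} [NormedAddCommGroup H] [InnerProductSpace ℂ H] [CompleteSpace H]
    [Nontrivial H] [SecondCountableTopology H] (b : HilbertBasis ι ℂ H)
    [MeasurableSpace ↥(projSet H)] [BorelSpace ↥(projSet H)] :
    -- affine
    (∀ (μ₁ μ₂ : Measure ↥(projSet H)) [IsProbabilityMeasure μ₁] [IsProbabilityMeasure μ₂]
        (W₁ W₂ : H →L[ℂ] H) (a : NNReal), a ≤ 1 → IsMB b μ₁ W₁ → IsMB b μ₂ W₂ →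
        IsMB b (a • μ₁ + (1 - a) • μ₂) ((a : ℝ) • W₁ + (((1 - a : NNReal) : ℝ)) • W₂)) ∧
    -- surjective
    (∀ W : H →L[ℂ] H, IsDensityOp b W →
        ∃ μ : Measure ↥(projSet H), IsProbabilityMeasure μ ∧ IsMB b μ W) ∧
    -- not injective when dim H ≥ 2
    (2 ≤ Module.rank ℂ H →
      ∃ (μ₁ μ₂ : Measure ↥(projSet H)) (W : H →L[ℂ] H),
        IsProbabilityMeasure μ₁ ∧ IsProbabilityMeasure μ₂ ∧ μ₁ ≠ μ₂ ∧
        IsMB b μ₁ W ∧ IsMB b μ₂ W) := by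
  classical
  have hι : Countable ι := hb_countable b
  obtain ⟨x0, hx0⟩ := exists_ne (0 : H)
  set e : H := (‖x0‖⁻¹ : ℂ) • x0 with hedef
  have he1 : ‖e‖ = 1 := norm_smul_inv_norm hx0
  refine ⟨?_, ?_, ?_⟩
  · -- affine
    intro μ₁ μ₂ hμ₁ hμ₂ W₁ W₂ a ha h1 h2
    obtain ⟨⟨hpos₁, hdiag₁⟩, hint₁⟩ := h1
    obtain ⟨⟨hpos₂, hdiag₂⟩, hint₂⟩ := h2
    have ha' : (0 : ℝ) ≤ (a : ℝ) := a.2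
    have hc' : (0 : ℝ) ≤ ((1 - a : NNReal) : ℝ) := (1 - a).2
    have hc : ((1 - a : NNReal) : ℝ) = 1 - (a : ℝ) := by
      rw [NNReal.coe_sub ha, NNReal.coe_one]
    constructor
    · constructor
      · exact (isPositive_real_smul hpos₁ ha').add (isPositive_real_smul hpos₂ hc')
      · have h := (hdiag₁.const_smul ((a : ℝ))).add (hdiag₂.const_smul (((1 - a : NNReal) : ℝ)))
        have hval : (a : ℝ) • (1 : ℂ) + ((1 - a : NNReal) : ℝ) • (1 : ℂ) = 1 := by
          rw [← Complex.coe_smul, ← Complex.coe_smul, smul_eq_mul, smul_eq_mul,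
            mul_one, mul_one, hc]
          push_cast
          ring
        rw [hval] at h
        refine h.congr_fun fun i => ?_
        simp only [ContinuousLinearMap.add_apply, ContinuousLinearMap.smul_apply, inner_add_right]
        rw [inner_real_smul_right, inner_real_smul_right, ← Complex.coe_smul, ← Complex.coe_smul,
          smul_eq_mul, smul_eq_mul]
    · intro A hA
      have hs₁ := density_summable b ⟨hpos₁, hdiag₁⟩ A
      have hs₂ := density_summable b ⟨hpos₂, hdiag₂⟩ A
      have hL : traceAlong b ((((a : ℝ) • W₁ + ((1 - a : NNReal) : ℝ) • W₂)) * A)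
          = (a : ℝ) • traceAlong b (W₁ * A) + ((1 - a : NNReal) : ℝ) • traceAlong b (W₂ * A) := by
        have hterm : ∀ i : ι, ⟪b i, ((((a : ℝ) • W₁ + ((1 - a : NNReal) : ℝ) • W₂)) * A) (b i)⟫
            = (a : ℝ) • ⟪b i, (W₁ * A) (b i)⟫
              + ((1 - a : NNReal) : ℝ) • ⟪b i, (W₂ * A) (b i)⟫ := by
          intro i
          rw [add_mul, smul_mul_assoc, smul_mul_assoc]
          simp only [ContinuousLinearMap.add_apply, ContinuousLinearMap.smul_apply,
            inner_add_right]
          rw [inner_real_smul_right, inner_real_smul_right, ← Complex.coe_smul, ← Complex.coe_smul,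
            smul_eq_mul, smul_eq_mul]
        calc traceAlong b ((((a : ℝ) • W₁ + ((1 - a : NNReal) : ℝ) • W₂)) * A)
            = ∑' i, ((a : ℝ) • ⟪b i, (W₁ * A) (b i)⟫
              + ((1 - a : NNReal) : ℝ) • ⟪b i, (W₂ * A) (b i)⟫) := tsum_congr hterm
          _ = _ := by
            rw [Summable.tsum_add (hs₁.const_smul _) (hs₂.const_smul _),
              Summable.tsum_const_smul _ hs₁, Summable.tsum_const_smul _ hs₂]
            rfl
      rw [hL, hint₁ A hA, hint₂ A hA]
      have hint1 : Integrable (fun P : ↥(projSet H) => traceAlong b (P.1 * A))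
          ((a : ℝ≥0∞) • μ₁) :=
        (f_integrable b hι A μ₁).smul_measure ENNReal.coe_ne_top
      have hint2 : Integrable (fun P : ↥(projSet H) => traceAlong b (P.1 * A))
          (((1 - a : NNReal) : ℝ≥0∞) • μ₂) :=
        (f_integrable b hι A μ₂).smul_measure ENNReal.coe_ne_top
      have hsm : (a • μ₁ + (1 - a) • μ₂ : Measure ↥(projSet H))
          = (a : ℝ≥0∞) • μ₁ + ((1 - a : NNReal) : ℝ≥0∞) • μ₂ := rfl
      rw [hsm, integral_add_measure hint1 hint2, integral_smul_measure, integral_smul_measure]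
      simp only [ENNReal.coe_toReal]
  · -- surjective
    intro W hW
    obtain ⟨S, hsa, hsq, hs1⟩ := density_sqrt b hW
    have hxP : (rankOne e) ∈ projSet H := ⟨e, he1, rfl⟩
    set x : ι → ↥(projSet H) := fun j =>
      if h : S (b j) = 0 then ⟨rankOne e, hxP⟩
      else ⟨rankOne ((‖S (b j)‖⁻¹ : ℂ) • S (b j)), ⟨_, norm_smul_inv_norm h, rfl⟩⟩ with hxdef
    set p : ι → ℝ≥0∞ := fun j => ENNReal.ofReal (‖S (b j)‖ ^ 2) with hpdef
    have hμuniv : (Measure.sum fun j => p j • Measure.dirac (x j)) Set.univ = 1 := by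
      rw [Measure.sum_apply _ MeasurableSet.univ]
      have h1 : ∀ j, (p j • Measure.dirac (x j)) Set.univ = p j := by
        intro j; simp
      rw [tsum_congr h1, hpdef]
      rw [← ENNReal.ofReal_tsum_of_nonneg (fun j => by positivity) hs1.summable, hs1.tsum_eq]
      exact ENNReal.ofReal_one
    haveI hprob : IsProbabilityMeasure (Measure.sum fun j => p j • Measure.dirac (x j)) :=
      ⟨hμuniv⟩
    refine ⟨Measure.sum fun j => p j • Measure.dirac (x j), hprob, hW, ?_⟩
    intro A hA
    have hT := density_hasSum b hW hsa hsq hs1.summable A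
    have hLHS : traceAlong b (W * A) = ∑' j, ⟪S (b j), A (S (b j))⟫ := hT.tsum_eq
    have hint : Integrable (fun P : ↥(projSet H) => traceAlong b (P.1 * A))
        (Measure.sum fun j => p j • Measure.dirac (x j)) := f_integrable b hι A _
    rw [hLHS, integral_sum_measure hint]
    have hterm : ∀ j, (∫ P, traceAlong b ((P : H →L[ℂ] H) * A) ∂(p j • Measure.dirac (x j)))
        = ⟪S (b j), A (S (b j))⟫ := by
      intro j
      rw [integral_smul_measure, integral_dirac]
      by_cases h : S (b j) = 0
      · simp [hpdef, h]
      · have hv0 : ‖S (b j)‖ ≠ 0 := by simpa using h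
        have hxj : ((x j : ↥(projSet H)) : H →L[ℂ] H)
            = rankOne ((‖S (b j)‖⁻¹ : ℂ) • S (b j)) := by
          rw [hxdef]; simp only [h, dif_neg, not_false_iff]
        have hfj : traceAlong b (((x j : ↥(projSet H)) : H →L[ℂ] H) * A)
            = ⟪(‖S (b j)‖⁻¹ : ℂ) • S (b j), A ((‖S (b j)‖⁻¹ : ℂ) • S (b j))⟫ := by
          rw [hxj, traceAlong_rankOne]
        rw [hfj, hpdef]
        simp only
        rw [ENNReal.toReal_ofReal (by positivity), A.map_smul, inner_smul_left, inner_smul_right,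
          map_inv₀, Complex.conj_ofReal, ← Complex.coe_smul, smul_eq_mul]
        have hvC : ((‖S (b j)‖ : ℂ)) ≠ 0 := by exact_mod_cast hv0
        push_cast
        field_simp
      -- end hterm
    exact (tsum_congr hterm).symm
  · -- non injective
    intro hrank
    have he0 : e ≠ 0 := by
      intro h0; rw [h0] at he1; simp at he1
    -- find a unit vector orthogonal to e
    have hexists : ∃ y : H, y ≠ 0 ∧ ⟪e, y⟫ = 0 := by
      by_contra hcon
      push_neg at hcon
      haveI : FiniteDimensional ℂ ↥(ℂ ∙ e) := FiniteDimensional.span_of_finite ℂ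
        (Set.finite_singleton e)
      haveI : CompleteSpace ↥(ℂ ∙ e) := FiniteDimensional.complete ℂ _
      have horth : (ℂ ∙ e)ᗮ = ⊥ := by
        rw [Submodule.eq_bot_iff]
        intro y hy
        by_contra hy0
        exact (hcon y hy0) ((Submodule.mem_orthogonal _ y).mp hy e
          (Submodule.mem_span_singleton_self e))
      have hspan : (ℂ ∙ e) = ⊤ := Submodule.orthogonal_eq_bot_iff.mp horth
      have hle : Module.rank ℂ H ≤ 1 := by
        have h1 := rank_span_le (R := ℂ) ({e} : Set H)
        rw [hspan, rank_top] at h1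
        simpa using h1
      have : (2 : Cardinal) ≤ 1 := le_trans hrank hle
      norm_num at this
    obtain ⟨y, hy0, hyo⟩ := hexists
    set e₂ : H := (‖y‖⁻¹ : ℂ) • y with he₂def
    have he₂1 : ‖e₂‖ = 1 := norm_smul_inv_norm hy0
    have he₂0 : e₂ ≠ 0 := by
      intro h0; rw [h0] at he₂1; simp at he₂1
    have ho : ⟪e, e₂⟫ = 0 := by rw [he₂def, inner_smul_right, hyo, mul_zero]
    have ho' : ⟪e₂, e⟫ = 0 := by rw [← inner_conj_symm, ho, map_zero]
    set r : ℝ := (Real.sqrt 2)⁻¹ with hrdef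
    have hs2 : (0 : ℝ) < Real.sqrt 2 := Real.sqrt_pos.mpr (by norm_num)
    have hr0 : 0 < r := by rw [hrdef]; positivity
    have hrr : r * r = 2⁻¹ := by
      rw [hrdef, ← mul_inv, Real.mul_self_sqrt (by norm_num)]
    set q₁ : H := r • (e + e₂) with hq₁def
    set q₂ : H := r • (e - e₂) with hq₂def
    have hnormadd : ‖e + e₂‖ = Real.sqrt 2 := by
      have h2 : ‖e + e₂‖ ^ 2 = 2 := by
        rw [@norm_add_sq ℂ]
        simp [ho, he1, he₂1]
        norm_num
      rw [← Real.sqrt_sq (norm_nonneg (e + e₂)), h2]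
    have hnormsub : ‖e - e₂‖ = Real.sqrt 2 := by
      have h2 : ‖e - e₂‖ ^ 2 = 2 := by
        rw [@norm_sub_sq ℂ]
        simp [ho, he1, he₂1]
        norm_num
      rw [← Real.sqrt_sq (norm_nonneg (e - e₂)), h2]
    have hq₁n : ‖q₁‖ = 1 := by
      rw [hq₁def, norm_smul, hnormadd, Real.norm_eq_abs, abs_of_pos hr0, hrdef]
      field_simp
    have hq₂n : ‖q₂‖ = 1 := by
      rw [hq₂def, norm_smul, hnormsub, Real.norm_eq_abs, abs_of_pos hr0, hrdef]
      field_simp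
    have hq₁0 : q₁ ≠ 0 := by
      intro h0; rw [h0] at hq₁n; simp at hq₁n
    have hq₂0 : q₂ ≠ 0 := by
      intro h0; rw [h0] at hq₂n; simp at hq₂n
    set P₁ : ↥(projSet H) := ⟨rankOne e, ⟨e, he1, rfl⟩⟩ with hP₁def
    set P₂ : ↥(projSet H) := ⟨rankOne e₂, ⟨e₂, he₂1, rfl⟩⟩ with hP₂def
    set Q₁ : ↥(projSet H) := ⟨rankOne q₁, ⟨q₁, hq₁n, rfl⟩⟩ with hQ₁def
    set Q₂ : ↥(projSet H) := ⟨rankOne q₂, ⟨q₂, hq₂n, rfl⟩⟩ with hQ₂def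
    set W : H →L[ℂ] H := (2⁻¹ : ℝ) • rankOne e + (2⁻¹ : ℝ) • rankOne e₂ with hWdef
    set μ₁ : Measure ↥(projSet H) :=
      (2⁻¹ : ℝ≥0∞) • Measure.dirac P₁ + (2⁻¹ : ℝ≥0∞) • Measure.dirac P₂ with hμ₁def
    set μ₂ : Measure ↥(projSet H) :=
      (2⁻¹ : ℝ≥0∞) • Measure.dirac Q₁ + (2⁻¹ : ℝ≥0∞) • Measure.dirac Q₂ with hμ₂def
    haveI hμ₁p : IsProbabilityMeasure μ₁ := by
      constructor
      rw [hμ₁def]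
      simp [ENNReal.inv_two_add_inv_two]
    haveI hμ₂p : IsProbabilityMeasure μ₂ := by
      constructor
      rw [hμ₂def]
      simp [ENNReal.inv_two_add_inv_two]
    -- density operator
    have hdens : IsDensityOp b W := by
      constructor
      · exact (isPositive_real_smul (rankOne_isPositive e) (by norm_num)).add
          (isPositive_real_smul (rankOne_isPositive e₂) (by norm_num))
      · have h := ((hasSum_diag_rankOne b e he1).const_smul ((2⁻¹ : ℝ))).add
          ((hasSum_diag_rankOne b e₂ he₂1).const_smul ((2⁻¹ : ℝ)))
        have hval : (2⁻¹ : ℝ) • (1 : ℂ) + (2⁻¹ : ℝ) • (1 : ℂ) = 1 := by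
          simp only [← Complex.coe_smul, smul_eq_mul]
          norm_num
        rw [hval] at h
        refine h.congr_fun fun i => ?_
        rw [hWdef]
        simp only [ContinuousLinearMap.add_apply, ContinuousLinearMap.smul_apply, inner_add_right]
        rw [inner_real_smul_right, inner_real_smul_right, ← Complex.coe_smul, ← Complex.coe_smul,
          smul_eq_mul, smul_eq_mul]
    -- trace of W * A
    have htr : ∀ A : H →L[ℂ] H, traceAlong b (W * A)
        = (2⁻¹ : ℝ) • ⟪e, A e⟫ + (2⁻¹ : ℝ) • ⟪e₂, A e₂⟫ := by
      intro A
      have h := ((hasSum_rankOne_mul b e A).const_smul ((2⁻¹ : ℝ))).add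
        ((hasSum_rankOne_mul b e₂ A).const_smul ((2⁻¹ : ℝ)))
      have h' : HasSum (fun i => ⟪b i, (W * A) (b i)⟫)
          ((2⁻¹ : ℝ) • ⟪e, A e⟫ + (2⁻¹ : ℝ) • ⟪e₂, A e₂⟫) := by
        refine h.congr_fun fun i => ?_
        rw [hWdef, add_mul, smul_mul_assoc, smul_mul_assoc]
        simp only [ContinuousLinearMap.add_apply, ContinuousLinearMap.smul_apply, inner_add_right]
        rw [inner_real_smul_right, inner_real_smul_right, ← Complex.coe_smul, ← Complex.coe_smul,
          smul_eq_mul, smul_eq_mul]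
      exact h'.tsum_eq
    -- integrals against the two-point measures
    have hmint : ∀ (z w : ↥(projSet H)) (A : H →L[ℂ] H),
        (∫ P, traceAlong b ((P : H →L[ℂ] H) * A)
          ∂((2⁻¹ : ℝ≥0∞) • Measure.dirac z + (2⁻¹ : ℝ≥0∞) • Measure.dirac w))
        = (2⁻¹ : ℝ) • traceAlong b ((z : H →L[ℂ] H) * A)
          + (2⁻¹ : ℝ) • traceAlong b ((w : H →L[ℂ] H) * A) := by
      intro z w A
      have hint1 : Integrable (fun P : ↥(projSet H) => traceAlong b (P.1 * A))
          ((2⁻¹ : ℝ≥0∞) • Measure.dirac z) :=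
        (f_integrable b hι A (Measure.dirac z)).smul_measure (by norm_num)
      have hint2 : Integrable (fun P : ↥(projSet H) => traceAlong b (P.1 * A))
          ((2⁻¹ : ℝ≥0∞) • Measure.dirac w) :=
        (f_integrable b hι A (Measure.dirac w)).smul_measure (by norm_num)
      rw [integral_add_measure hint1 hint2, integral_smul_measure, integral_smul_measure,
        integral_dirac, integral_dirac]
      norm_num
    -- the cross identity
    have hq : ∀ A : H →L[ℂ] H, ⟪q₁, A q₁⟫ + ⟪q₂, A q₂⟫ = ⟪e, A e⟫ + ⟪e₂, A e₂⟫ := by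
      intro A
      have hcc : ((r : ℂ)) * (r : ℂ) = (2⁻¹ : ℂ) := by
        rw [← Complex.ofReal_mul, hrr]
        norm_num
      rw [hq₁def, hq₂def, ← Complex.coe_smul, ← Complex.coe_smul]
      rw [A.map_smul, A.map_smul, inner_smul_left, inner_smul_right, inner_smul_left,
        inner_smul_right, Complex.conj_ofReal]
      simp only [map_add, map_sub, inner_add_left, inner_add_right, inner_sub_left,
        inner_sub_right]
      linear_combination (2 * ⟪e, A e⟫ + 2 * ⟪e₂, A e₂⟫) * hcc
    -- measures are different
    have hPQ : μ₁ ≠ μ₂ := by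
      have hP₁Q₁ : P₁ ≠ Q₁ := by
        intro hcon
        have : rankOne e = rankOne q₁ := congrArg Subtype.val hcon
        have happ := congrArg (fun T : H →L[ℂ] H => T e₂) this
        simp only [rankOne_apply] at happ
        rw [ho] at happ
        have hq₁e₂ : ⟪q₁, e₂⟫ = (r : ℂ) := by
          rw [hq₁def, ← Complex.coe_smul, inner_smul_left, Complex.conj_ofReal,
            inner_add_left, ho, inner_self_eq_norm_sq_to_K, he₂1]
          norm_num
        rw [hq₁e₂] at happ
        simp only [zero_smul] at happ
        have : (r : ℂ) • q₁ ≠ 0 := smul_ne_zero (by exact_mod_cast hr0.ne') hq₁0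
        exact this happ.symm
      have hP₁Q₂ : P₁ ≠ Q₂ := by
        intro hcon
        have : rankOne e = rankOne q₂ := congrArg Subtype.val hcon
        have happ := congrArg (fun T : H →L[ℂ] H => T e₂) this
        simp only [rankOne_apply] at happ
        rw [ho] at happ
        have hq₂e₂ : ⟪q₂, e₂⟫ = (-r : ℝ) := by
          rw [hq₂def, ← Complex.coe_smul, inner_smul_left, Complex.conj_ofReal,
            inner_sub_left, ho, inner_self_eq_norm_sq_to_K, he₂1]
          push_cast
          ring
        rw [hq₂e₂] at happ
        simp only [zero_smul] at happ
        have hrne : ((-r : ℝ) : ℂ) ≠ 0 := by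
          simp only [ne_eq, Complex.ofReal_eq_zero, neg_eq_zero]
          exact hr0.ne'
        have : ((-r : ℝ) : ℂ) • q₂ ≠ 0 := smul_ne_zero hrne hq₂0
        exact this happ.symm
      have hP₁P₂ : P₁ ≠ P₂ := by
        intro hcon
        have : rankOne e = rankOne e₂ := congrArg Subtype.val hcon
        have happ := congrArg (fun T : H →L[ℂ] H => T e) this
        simp only [rankOne_apply] at happ
        rw [ho', inner_self_eq_norm_sq_to_K, he1] at happ
        simp only [zero_smul] at happ
        norm_num at happ
        exact he0 happ
      intro hcon
      have h1 : μ₁ {P₁} = 2⁻¹ + 2⁻¹ * 0 := by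
        rw [hμ₁def]
        simp only [Measure.add_apply, Measure.smul_apply, smul_eq_mul]
        rw [Measure.dirac_apply' _ (measurableSet_singleton P₁),
          Measure.dirac_apply' _ (measurableSet_singleton P₁)]
        rw [Set.indicator_of_mem (Set.mem_singleton P₁),
          Set.indicator_of_notMem (by simpa using hP₁P₂.symm)]
        simp
      have h2 : μ₂ {P₁} = 2⁻¹ * 0 + 2⁻¹ * 0 := by
        rw [hμ₂def]
        simp only [Measure.add_apply, Measure.smul_apply, smul_eq_mul]
        rw [Measure.dirac_apply' _ (measurableSet_singleton P₁),
          Measure.dirac_apply' _ (measurableSet_singleton P₁)]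
        rw [Set.indicator_of_notMem (by simpa using hP₁Q₁.symm),
          Set.indicator_of_notMem (by simpa using hP₁Q₂.symm)]
      rw [hcon, h2] at h1
      norm_num at h1
      exact absurd h1.symm (by simp)
    refine ⟨μ₁, μ₂, W, hμ₁p, hμ₂p, hPQ, ⟨hdens, ?_⟩, ⟨hdens, ?_⟩⟩
    · intro A hA
      rw [htr A, hμ₁def, hmint P₁ P₂ A]
      have hz : ((P₁ : ↥(projSet H)) : H →L[ℂ] H) = rankOne e := rfl
      have hw : ((P₂ : ↥(projSet H)) : H →L[ℂ] H) = rankOne e₂ := rfl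
      rw [hz, hw, traceAlong_rankOne, traceAlong_rankOne]
    · intro A hA
      rw [htr A, hμ₂def, hmint Q₁ Q₂ A]
      have hz : ((Q₁ : ↥(projSet H)) : H →L[ℂ] H) = rankOne q₁ := rfl
      have hw : ((Q₂ : ↥(projSet H)) : H →L[ℂ] H) = rankOne q₂ := rfl
      rw [hz, hw, traceAlong_rankOne, traceAlong_rankOne]
      simp only [← Complex.coe_smul, smul_eq_mul]
      rw [← mul_add, ← mul_add, hq A]
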